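/- Σ_{I, J ∈ S_min, I ≠ J} μ(I)μ(J)·T(sup(I, J)) = Σ_{J ∈ S \ S_min} T(J)·μ(J)²·(1 − p_J⁻¹). -/

import Mathlib

open scoped Classical

section
variable {S : Type*} [Fintype S] [SemilatticeSup S]

lemma exists_child' (hchain : ∀ x y z : S, x ≤ y → x ≤ z → y ≤ z ∨ z ≤ y)
    {I L : S} (h : I < L) : ∃ A, I ≤ A ∧ A ⋖ L := by
  obtain ⟨A, hA, hmax⟩ : ∃ m ∈ Finset.univ.filter fun y : S => I ≤ y ∧ y < L,
      ∀ x ∈ Finset.univ.filter fun y : S => I ≤ y ∧ y < L, ¬ m < x := by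
    obtain ⟨m, hm⟩ := Finset.exists_maximal
      (s := Finset.univ.filter fun y : S => I ≤ y ∧ y < L) ⟨I, by simp [h]⟩
    exact ⟨m, hm.1, fun x hx hlt => lt_irrefl _ (lt_of_lt_of_le hlt (hm.2 hx hlt.le))⟩
  simp only [Finset.mem_filter, Finset.mem_univ, true_and] at hA
  refine ⟨A, hA.1, hA.2, fun z hz hzL => ?_⟩
  exact hmax z (by simp [le_trans hA.1 hz.le, hzL]) hz

lemma child_unique' (hchain : ∀ x y z : S, x ≤ y → x ≤ z → y ≤ z ∨ z ≤ y)
    {I A B L : S} (hIA : I ≤ A) (hA : A ⋖ L) (hIB : I ≤ B) (hB : B ⋖ L) : A = B := by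
  rcases hchain I A B hIA hIB with h | h
  · rcases h.lt_or_eq with h' | h'
    · exact (hA.2 h' hB.lt).elim
    · exact h'
  · rcases h.lt_or_eq with h' | h'
    · exact (hB.2 h' hA.lt).elim
    · exact h'.symm

end

section
variable {S : Type*} [Fintype S] [SemilatticeSup S]

lemma mu_sum' (hchain : ∀ x y z : S, x ≤ y → x ≤ z → y ≤ z ∨ z ≤ y)
    (p : S → ℕ) (hp : ∀ L : S, ¬ IsMin L → 2 ≤ p L)
    (hcard : ∀ L : S, ¬ IsMin L →
      (Finset.univ.filter (fun J : S => J ⋖ L)).card = p L)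
    (μ : S → ℝ) (hμ : ∀ L J : S, J ⋖ L → μ J = μ L / p L)
    (L : S) :
    ∑ I ∈ Finset.univ.filter (fun I : S => IsMin I ∧ I ≤ L), μ I = μ L := by
  induction L using WellFoundedLT.induction with
  | ind L IH =>
  by_cases hL : IsMin L
  · have : Finset.univ.filter (fun I : S => IsMin I ∧ I ≤ L) = {L} := by
      ext I
      simp only [Finset.mem_filter, Finset.mem_univ, true_and, Finset.mem_singleton]
      constructor
      · rintro ⟨hI, hIL⟩; exact le_antisymm hIL (hL hIL)
      · rintro rfl; exact ⟨hL, le_rfl⟩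
    rw [this, Finset.sum_singleton]
  · have hex : ∀ I : S, I < L → ∃ A, I ≤ A ∧ A ⋖ L := fun I h => exists_child' hchain h
    choose! g hg1 hg2 using hex
    have hmaps : ∀ I ∈ Finset.univ.filter (fun I : S => IsMin I ∧ I ≤ L),
        g I ∈ Finset.univ.filter (fun A : S => A ⋖ L) := by
      intro I hI
      simp only [Finset.mem_filter, Finset.mem_univ, true_and] at hI ⊢
      have hlt : I < L := lt_of_le_of_ne hI.2 (by rintro rfl; exact hL hI.1)
      exact hg2 I hlt
    rw [← Finset.sum_fiberwise_of_maps_to hmaps]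
    have hfib : ∀ A ∈ Finset.univ.filter (fun A : S => A ⋖ L),
        (Finset.univ.filter (fun I : S => IsMin I ∧ I ≤ L)).filter (fun I => g I = A)
          = Finset.univ.filter (fun I : S => IsMin I ∧ I ≤ A) := by
      intro A hA
      simp only [Finset.mem_filter, Finset.mem_univ, true_and] at hA
      ext I
      simp only [Finset.mem_filter, Finset.mem_univ, true_and]
      constructor
      · rintro ⟨⟨hI, hIL⟩, rfl⟩
        have hlt : I < L := lt_of_le_of_ne hIL (by rintro rfl; exact hL hI)
        exact ⟨hI, hg1 I hlt⟩
      · rintro ⟨hI, hIA⟩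
        have hIL : I < L := lt_of_le_of_lt hIA hA.lt
        exact ⟨⟨hI, hIL.le⟩, child_unique' hchain (hg1 I hIL) (hg2 I hIL) hIA hA⟩
    calc ∑ A ∈ Finset.univ.filter (fun A : S => A ⋖ L),
          ∑ I ∈ (Finset.univ.filter (fun I : S => IsMin I ∧ I ≤ L)).filter (fun I => g I = A), μ I
        = ∑ A ∈ Finset.univ.filter (fun A : S => A ⋖ L), μ A := by
          refine Finset.sum_congr rfl fun A hA => ?_
          rw [hfib A hA]
          exact IH A (by simpa using hA : A ⋖ L).lt
      _ = ∑ A ∈ Finset.univ.filter (fun A : S => A ⋖ L), μ L / p L := by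
          refine Finset.sum_congr rfl fun A hA => hμ L A (by simpa using hA)
      _ = μ L := by
          rw [Finset.sum_const, hcard L hL, nsmul_eq_mul]
          have : (p L : ℝ) ≠ 0 := by
            have := hp L hL
            have : p L ≠ 0 := by omega
            exact_mod_cast this
          field_simp

lemma G_eq' (hchain : ∀ x y z : S, x ≤ y → x ≤ z → y ≤ z ∨ z ≤ y)
    (p : S → ℕ) (hp : ∀ L : S, ¬ IsMin L → 2 ≤ p L)
    (hcard : ∀ L : S, ¬ IsMin L →
      (Finset.univ.filter (fun J : S => J ⋖ L)).card = p L)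
    (μ : S → ℝ) (hμ : ∀ L J : S, J ⋖ L → μ J = μ L / p L)
    (L : S) :
    ∑ q ∈ Finset.univ.filter
        (fun q : S × S => IsMin q.1 ∧ IsMin q.2 ∧ q.1 ⊔ q.2 ≤ L),
      μ q.1 * μ q.2 = μ L ^ 2 := by
  have hset : Finset.univ.filter
      (fun q : S × S => IsMin q.1 ∧ IsMin q.2 ∧ q.1 ⊔ q.2 ≤ L)
      = (Finset.univ.filter (fun I : S => IsMin I ∧ I ≤ L)) ×ˢ
        (Finset.univ.filter (fun I : S => IsMin I ∧ I ≤ L)) := by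
    ext q
    simp only [Finset.mem_filter, Finset.mem_univ, true_and, Finset.mem_product,
      sup_le_iff]
    tauto
  rw [hset, Finset.sum_product, sq, ← mu_sum' hchain p hp hcard μ hμ L]
  rw [Finset.sum_mul]
  exact Finset.sum_congr rfl fun I _ => by rw [Finset.mul_sum]

lemma F_eq' (hchain : ∀ x y z : S, x ≤ y → x ≤ z → y ≤ z ∨ z ≤ y)
    (p : S → ℕ) (hp : ∀ L : S, ¬ IsMin L → 2 ≤ p L)
    (hcard : ∀ L : S, ¬ IsMin L →
      (Finset.univ.filter (fun J : S => J ⋖ L)).card = p L)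
    (μ : S → ℝ) (hμ : ∀ L J : S, J ⋖ L → μ J = μ L / p L)
    (L : S) (hL : ¬ IsMin L) :
    ∑ q ∈ Finset.univ.filter
        (fun q : S × S => IsMin q.1 ∧ IsMin q.2 ∧ q.1 ≠ q.2 ∧ q.1 ⊔ q.2 = L),
      μ q.1 * μ q.2 = μ L ^ 2 * (1 - (p L : ℝ)⁻¹) := by
  have hp0 : (p L : ℝ) ≠ 0 := by
    have := hp L hL
    have h2 : p L ≠ 0 := by omega
    exact_mod_cast h2
  set QL := Finset.univ.filter
    (fun q : S × S => IsMin q.1 ∧ IsMin q.2 ∧ q.1 ⊔ q.2 ≤ L) with hQL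
  have hsplit := Finset.sum_filter_add_sum_filter_not QL
    (fun q : S × S => q.1 ⊔ q.2 = L) (fun q => μ q.1 * μ q.2)
  have hG : ∑ q ∈ QL, μ q.1 * μ q.2 = μ L ^ 2 :=
    G_eq' hchain p hp hcard μ hμ L
  -- the "equal" part is our target set
  have heq1 : QL.filter (fun q : S × S => q.1 ⊔ q.2 = L)
      = Finset.univ.filter
        (fun q : S × S => IsMin q.1 ∧ IsMin q.2 ∧ q.1 ≠ q.2 ∧ q.1 ⊔ q.2 = L) := by
    ext q
    simp only [hQL, Finset.mem_filter, Finset.mem_univ, true_and]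
    constructor
    · rintro ⟨⟨h1, h2, h3⟩, h4⟩
      refine ⟨h1, h2, ?_, h4⟩
      intro heq
      rw [← heq, sup_idem] at h4
      exact hL (h4 ▸ h1)
    · rintro ⟨h1, h2, h3, h4⟩
      exact ⟨⟨h1, h2, h4.le⟩, h4⟩
  -- the strict part sums to μL²/pL
  have hex : ∀ x : S, x < L → ∃ A, x ≤ A ∧ A ⋖ L := fun x h => exists_child' hchain h
  choose! g hg1 hg2 using hex
  have hmaps : ∀ q ∈ QL.filter (fun q : S × S => ¬ q.1 ⊔ q.2 = L),
      g (q.1 ⊔ q.2) ∈ Finset.univ.filter (fun A : S => A ⋖ L) := by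
    intro q hq
    simp only [hQL, Finset.mem_filter, Finset.mem_univ, true_and] at hq ⊢
    exact hg2 _ (lt_of_le_of_ne hq.1.2.2 hq.2)
  have hstrict : ∑ q ∈ QL.filter (fun q : S × S => ¬ q.1 ⊔ q.2 = L),
      μ q.1 * μ q.2 = μ L ^ 2 * (p L : ℝ)⁻¹ := by
    rw [← Finset.sum_fiberwise_of_maps_to hmaps]
    have hfib : ∀ A ∈ Finset.univ.filter (fun A : S => A ⋖ L),
        (QL.filter (fun q : S × S => ¬ q.1 ⊔ q.2 = L)).filter
            (fun q => g (q.1 ⊔ q.2) = A)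
          = Finset.univ.filter
            (fun q : S × S => IsMin q.1 ∧ IsMin q.2 ∧ q.1 ⊔ q.2 ≤ A) := by
      intro A hA
      simp only [Finset.mem_filter, Finset.mem_univ, true_and] at hA
      ext q
      simp only [hQL, Finset.mem_filter, Finset.mem_univ, true_and]
      constructor
      · rintro ⟨⟨⟨h1, h2, h3⟩, h4⟩, rfl⟩
        exact ⟨h1, h2, hg1 _ (lt_of_le_of_ne h3 h4)⟩
      · rintro ⟨h1, h2, h3⟩
        have hlt : q.1 ⊔ q.2 < L := lt_of_le_of_lt h3 hA.lt
        exact ⟨⟨⟨h1, h2, hlt.le⟩, hlt.ne⟩,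
          child_unique' hchain (hg1 _ hlt) (hg2 _ hlt) h3 hA⟩
    calc ∑ A ∈ Finset.univ.filter (fun A : S => A ⋖ L),
          ∑ q ∈ (QL.filter (fun q : S × S => ¬ q.1 ⊔ q.2 = L)).filter
              (fun q => g (q.1 ⊔ q.2) = A), μ q.1 * μ q.2
        = ∑ A ∈ Finset.univ.filter (fun A : S => A ⋖ L), μ A ^ 2 := by
          refine Finset.sum_congr rfl fun A hA => ?_
          rw [hfib A hA]
          exact G_eq' hchain p hp hcard μ hμ A
      _ = ∑ A ∈ Finset.univ.filter (fun A : S => A ⋖ L), (μ L / p L) ^ 2 := by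
          refine Finset.sum_congr rfl fun A hA => by
            rw [hμ L A (by simpa using hA)]
      _ = μ L ^ 2 * (p L : ℝ)⁻¹ := by
          rw [Finset.sum_const, hcard L hL, nsmul_eq_mul]
          field_simp
  rw [heq1, hstrict, hG] at hsplit
  linarith

end


/-- In a finite directed tree `S` (finite partial order with greatest element `K`,
binary suprema, totally ordered up-sets), where every non-minimal vertex `L`
has exactly `p L ≥ 2` children and the weight `μ` satisfies `μ K > 0` and
`μ J = μ L / p L` for every child `J` of `L`, and `T : S → ℝ` is arbitrary:
`Σ_{I,J ∈ S_min, I ≠ J} μ(I) μ(J) T(sup(I,J))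
  = Σ_{J ∈ S \ S_min} T(J) μ(J)² (1 − p_J⁻¹)`. -/
theorem trace_replica_matrix
    {S : Type*} [Fintype S] [SemilatticeSup S]
    (K : S) (hK : ∀ x : S, x ≤ K)
    (hchain : ∀ x y z : S, x ≤ y → x ≤ z → y ≤ z ∨ z ≤ y)
    (p : S → ℕ) (hp : ∀ L : S, ¬ IsMin L → 2 ≤ p L)
    (hcard : ∀ L : S, ¬ IsMin L →
      (Finset.univ.filter (fun J : S => J ⋖ L)).card = p L)
    (μ : S → ℝ) (hμK : 0 < μ K)
    (hμ : ∀ L J : S, J ⋖ L → μ J = μ L / p L)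
    (T : S → ℝ) :
    ∑ I ∈ Finset.univ.filter (fun I : S => IsMin I),
      ∑ J ∈ Finset.univ.filter (fun J : S => IsMin J ∧ J ≠ I),
        μ I * μ J * T (I ⊔ J) =
      ∑ J ∈ Finset.univ.filter (fun J : S => ¬ IsMin J),
        T J * μ J ^ 2 * (1 - (p J : ℝ)⁻¹) := by
  have hpair : ∑ I ∈ Finset.univ.filter (fun I : S => IsMin I),
      ∑ J ∈ Finset.univ.filter (fun J : S => IsMin J ∧ J ≠ I),
        μ I * μ J * T (I ⊔ J)
      = ∑ q ∈ Finset.univ.filter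
          (fun q : S × S => IsMin q.1 ∧ IsMin q.2 ∧ q.1 ≠ q.2),
          μ q.1 * μ q.2 * T (q.1 ⊔ q.2) := by
    simp only [Finset.sum_filter]
    rw [show (Finset.univ : Finset (S × S)) = Finset.univ ×ˢ Finset.univ from
      Finset.univ_product_univ.symm, Finset.sum_product]
    refine Finset.sum_congr rfl fun I _ => ?_
    by_cases h1 : IsMin I
    · simp only [h1, if_true]
      refine Finset.sum_congr rfl fun J _ => ?_
      by_cases h2 : IsMin J <;> by_cases h3 : I = J <;>
        simp [h1, h2, h3, Ne, eq_comm]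
    · simp only [h1, if_false]
      refine (Finset.sum_eq_zero fun J _ => ?_).symm
      simp [h1]
  rw [hpair]
  have hmaps : ∀ q ∈ Finset.univ.filter
      (fun q : S × S => IsMin q.1 ∧ IsMin q.2 ∧ q.1 ≠ q.2),
      q.1 ⊔ q.2 ∈ Finset.univ.filter (fun L : S => ¬ IsMin L) := by
    intro q hq
    simp only [Finset.mem_filter, Finset.mem_univ, true_and] at hq ⊢
    intro hmin
    have h1 : q.1 ⊔ q.2 ≤ q.1 := hmin le_sup_left
    have h2 : q.2 ≤ q.1 := le_trans le_sup_right h1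
    exact hq.2.2 (le_antisymm (hq.1 h2) h2)
  rw [← Finset.sum_fiberwise_of_maps_to hmaps]
  refine Finset.sum_congr rfl fun L hL => ?_
  simp only [Finset.mem_filter, Finset.mem_univ, true_and] at hL
  have hset : (Finset.univ.filter
      (fun q : S × S => IsMin q.1 ∧ IsMin q.2 ∧ q.1 ≠ q.2)).filter
        (fun q => q.1 ⊔ q.2 = L)
      = Finset.univ.filter
        (fun q : S × S => IsMin q.1 ∧ IsMin q.2 ∧ q.1 ≠ q.2 ∧ q.1 ⊔ q.2 = L) := by
    ext q
    simp only [Finset.mem_filter, Finset.mem_univ, true_and]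
    tauto
  rw [hset]
  calc ∑ q ∈ Finset.univ.filter
        (fun q : S × S => IsMin q.1 ∧ IsMin q.2 ∧ q.1 ≠ q.2 ∧ q.1 ⊔ q.2 = L),
        μ q.1 * μ q.2 * T (q.1 ⊔ q.2)
      = ∑ q ∈ Finset.univ.filter
        (fun q : S × S => IsMin q.1 ∧ IsMin q.2 ∧ q.1 ≠ q.2 ∧ q.1 ⊔ q.2 = L),
        μ q.1 * μ q.2 * T L := by
        refine Finset.sum_congr rfl fun q hq => ?_
        simp only [Finset.mem_filter, Finset.mem_univ, true_and] at hq
        rw [hq.2.2.2]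
    _ = (∑ q ∈ Finset.univ.filter
        (fun q : S × S => IsMin q.1 ∧ IsMin q.2 ∧ q.1 ≠ q.2 ∧ q.1 ⊔ q.2 = L),
        μ q.1 * μ q.2) * T L := by rw [Finset.sum_mul]
    _ = T L * μ L ^ 2 * (1 - (p L : ℝ)⁻¹) := by
        rw [F_eq' hchain p hp hcard μ hμ L hL]
        ring
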